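/- For p, q, r ∈ ℂ and t ∈ ℂ with t ≠ 0: if L and L′ are complex Lie algebras admitting bases realizing the bracket patterns d₅(p,q,r) and d₅(tp,tq,tr) respectively, then L and L′ are isomorphic as Lie algebras over ℂ. -/

import Mathlib

set_option maxRecDepth 8000
set_option maxHeartbeats 2000000


/-- `Realizes L c` means that the complex Lie algebra `L` admits a basis `e₁, …, e₅`
(indexed by `Fin 5`) in which the brackets of basis vectors are given by the
structure constants `c`, i.e. `⁅eᵢ, eⱼ⁆ = ∑ₖ c i j k • eₖ` for all `i < j`
(the remaining brackets being determined by antisymmetry). -/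
def Realizes (L : Type) [LieRing L] [LieAlgebra ℂ L]
    (c : Fin 5 → Fin 5 → Fin 5 → ℂ) : Prop :=
  ∃ e : Module.Basis (Fin 5) ℂ L, ∀ i j : Fin 5, i < j →
    ⁅e i, e j⁆ = ∑ k, c i j k • e k

/-- The bracket pattern `d₅(p,q,r)`:
`[e₂,e₄] = e₁ + p·e₂`, `[e₃,e₄] = e₂ + q·e₃`, `[e₁,e₅] = p(q−r)·e₁`,
`[e₂,e₅] = (r−q)·e₁`, `[e₃,e₅] = e₁ + r·e₂ − r(p−q)·e₃`, all other brackets zero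
(indices shifted down by one since `Fin 5` starts at `0`). -/
def d5 (p q r : ℂ) : Fin 5 → Fin 5 → Fin 5 → ℂ := fun i j =>
  if i = 1 ∧ j = 3 then ![1, p, 0, 0, 0]
  else if i = 2 ∧ j = 3 then ![0, 1, q, 0, 0]
  else if i = 0 ∧ j = 4 then ![p * (q - r), 0, 0, 0, 0]
  else if i = 1 ∧ j = 4 then ![r - q, 0, 0, 0, 0]
  else if i = 2 ∧ j = 4 then ![1, r, -(r * (p - q)), 0, 0]
  else 0

private lemma aux_sum_lie {M : Type*} [LieRing M] (g : Fin 5 → M) (y : M) :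
    ⁅∑ i, g i, y⁆ = ∑ i, ⁅g i, y⁆ :=
  map_sum (AddMonoidHom.mk' (fun x => ⁅x, y⁆) (fun a b => add_lie a b y)) g Finset.univ

private lemma aux_lie_sum {M : Type*} [LieRing M] (x : M) (g : Fin 5 → M) :
    ⁅x, ∑ i, g i⁆ = ∑ i, ⁅x, g i⁆ :=
  map_sum (AddMonoidHom.mk' (fun z => ⁅x, z⁆) (fun a b => lie_add x a b)) g Finset.univ

/-- For `t ≠ 0`, Lie algebras realizing the patterns `d₅(p,q,r)` and
`d₅(tp,tq,tr)` are isomorphic. -/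
theorem d5_projective (p q r t : ℂ) (ht : t ≠ 0)
    (L L' : Type) [LieRing L] [LieAlgebra ℂ L] [LieRing L'] [LieAlgebra ℂ L']
    (hL : Realizes L (d5 p q r)) (hL' : Realizes L' (d5 (t * p) (t * q) (t * r))) :
    Nonempty (L ≃ₗ⁅ℂ⁆ L') := by
  obtain ⟨e, he⟩ := hL
  obtain ⟨f, hf⟩ := hL'
  set d : Fin 5 → ℂ := ![t⁻¹ * t⁻¹, t⁻¹, 1, t⁻¹, t⁻¹ * t⁻¹] with hd
  have hdne : ∀ i, d i ≠ 0 := by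
    intro i
    fin_cases i <;> simp [hd] <;> exact ht
  let φ : L →ₗ[ℂ] L' := e.constr ℂ (fun i => d i • f i)
  let ψ : L' →ₗ[ℂ] L := f.constr ℂ (fun i => (d i)⁻¹ • e i)
  have hφ : ∀ i, φ (e i) = d i • f i := fun i => e.constr_basis ℂ _ i
  have hψ : ∀ i, ψ (f i) = (d i)⁻¹ • e i := fun i => f.constr_basis ℂ _ i
  have key0 : ∀ i j : Fin 5, i < j → φ ⁅e i, e j⁆ = ⁅φ (e i), φ (e j)⁆ := by
    intro i j h
    rw [he _ _ h, hφ, hφ, smul_lie, lie_smul, hf _ _ h, Finset.smul_sum, Finset.smul_sum,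
      map_sum]
    refine Finset.sum_congr rfl fun k _ => ?_
    rw [map_smul, hφ, smul_smul, smul_smul, smul_smul]
    congr 1
    fin_cases i <;> fin_cases j <;> (try exact absurd h (by decide)) <;> fin_cases k <;>
      simp [d5, hd] <;> field_simp <;> ring
  have key : ∀ i j : Fin 5, φ ⁅e i, e j⁆ = ⁅φ (e i), φ (e j)⁆ := by
    intro i j
    rcases lt_trichotomy i j with h | h | h
    · exact key0 i j h
    · subst h; simp
    · rw [← lie_skew (e i) (e j), ← lie_skew (φ (e i)) (φ (e j)), map_neg, key0 j i h]
  have main : ∀ x y : L, φ ⁅x, y⁆ = ⁅φ x, φ y⁆ := by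
    intro x y
    rw [← e.sum_repr x, ← e.sum_repr y]
    simp only [aux_sum_lie, aux_lie_sum, map_sum, map_smul, smul_lie, lie_smul,
      smul_smul, key]
  have h1 : φ.comp ψ = LinearMap.id := by
    apply f.ext; intro i
    rw [LinearMap.comp_apply, hψ i, map_smul, hφ i, smul_smul,
      inv_mul_cancel₀ (hdne i), one_smul, LinearMap.id_apply]
  have h2 : ψ.comp φ = LinearMap.id := by
    apply e.ext; intro i
    rw [LinearMap.comp_apply, hφ i, map_smul, hψ i, smul_smul,
      mul_inv_cancel₀ (hdne i), one_smul, LinearMap.id_apply]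
  let Φ : L →ₗ⁅ℂ⁆ L' := { φ with map_lie' := fun {x y} => main x y }
  have hl : Function.LeftInverse ψ Φ := fun x => by
    show ψ (φ x) = x
    rw [← LinearMap.comp_apply, h2, LinearMap.id_apply]
  have hr : Function.RightInverse ψ Φ := fun x => by
    show φ (ψ x) = x
    rw [← LinearMap.comp_apply, h1, LinearMap.id_apply]
  have hbij : Function.Bijective Φ := ⟨hl.injective, hr.surjective⟩
  exact ⟨LieEquiv.ofBijective Φ hbij⟩
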